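/- For every natural number n, 1 + 2⁻ⁿ < ∏_{k=n+1}^∞ (1 + 2⁻ᵏ); equivalently, ln(1 + 2⁻ⁿ) < ∑_{k=n+1}^∞ ln(1 + 2⁻ᵏ). -/

import Mathlib

open Real Filter

private noncomputable def dscF (n k : ℕ) : ℝ := 1 + (2 : ℝ) ^ (-((n + 1 + k : ℕ) : ℤ))

private noncomputable def dscG (n k : ℕ) : ℝ := (2 : ℝ) ^ (-((n + 1 + k : ℕ) : ℤ))

private lemma dscG_eq (n k : ℕ) :
    dscG n k = (2 : ℝ) ^ (-((n + 1 : ℕ) : ℤ)) * (1 / 2 : ℝ) ^ k := by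
  unfold dscG
  rw [show (-((n + 1 + k : ℕ) : ℤ)) = (-((n + 1 : ℕ) : ℤ)) + (-(k : ℤ)) by push_cast; ring,
    zpow_add₀ (by norm_num : (2:ℝ) ≠ 0)]
  congr 1
  rw [zpow_neg, zpow_natCast, one_div, inv_pow]

private lemma dscG_pos (n k : ℕ) : 0 < dscG n k := zpow_pos (by norm_num) _

private lemma dscG_hasSum (n : ℕ) : HasSum (dscG n) ((2 : ℝ) ^ (-(n : ℤ))) := by
  have h : HasSum (fun k : ℕ => (2 : ℝ) ^ (-((n + 1 : ℕ) : ℤ)) * (1 / 2 : ℝ) ^ k)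
      ((2 : ℝ) ^ (-((n + 1 : ℕ) : ℤ)) * (1 - 1 / 2)⁻¹) :=
    (hasSum_geometric_of_lt_one (by norm_num) (by norm_num)).mul_left _
  have h2 : (2 : ℝ) ^ (-((n + 1 : ℕ) : ℤ)) * (1 - 1 / 2 : ℝ)⁻¹ = (2 : ℝ) ^ (-(n : ℤ)) := by
    rw [show (-((n + 1 : ℕ) : ℤ)) = (-(n : ℤ)) + (-1) by push_cast; ring,
      zpow_add₀ (by norm_num : (2:ℝ) ≠ 0)]
    norm_num; ring
  rw [h2] at h
  exact h.congr_fun fun k => dscG_eq n k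

private lemma dsc_log_summable (n : ℕ) : Summable fun k => Real.log (dscF n k) := by
  apply Summable.of_nonneg_of_le (fun k => Real.log_nonneg (by
    have := (dscG_pos n k).le; unfold dscF dscG at *; linarith))
    (fun k => ?_) (dscG_hasSum n).summable
  have := Real.log_le_sub_one_of_pos (x := dscF n k)
    (by have := dscG_pos n k; unfold dscF dscG at *; linarith)
  unfold dscF dscG at *; linarith

private lemma dsc_exp_eq (n : ℕ) :
    Real.exp (∑' k, Real.log (dscF n k)) = ∏' k, dscF n k := by
  have := Real.rexp_tsum_eq_tprod (f := fun k => dscF n k)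
    (fun k => by show (0:ℝ) < dscF n k; have := dscG_pos n k; unfold dscF dscG at *; linarith)
    (dsc_log_summable n)
  simpa using this

private lemma dsc_multipliable (n : ℕ) : Multipliable (dscF n) := by
  have := Real.multipliable_of_summable_log (f := fun k => dscF n k)
    (fun k => by show (0:ℝ) < dscF n k; have := dscG_pos n k; unfold dscF dscG at *; linarith)
    (dsc_log_summable n)
  exact this

private lemma finset_one_add_sum_le_prod (s : Finset ℕ) (g : ℕ → ℝ) (hg : ∀ i, 0 ≤ g i) :
    1 + ∑ i ∈ s, g i ≤ ∏ i ∈ s, (1 + g i) := by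
  induction s using Finset.cons_induction with
  | empty => simp
  | cons a s ha ih =>
    rw [Finset.sum_cons, Finset.prod_cons]
    have hs : 0 ≤ ∑ i ∈ s, g i := Finset.sum_nonneg fun i _ => hg i
    nlinarith [hg a, ih]

private lemma dsc_le (n : ℕ) : 1 + (2 : ℝ) ^ (-(n : ℤ)) ≤ ∏' k, dscF n k := by
  have hprod : Tendsto (fun s : Finset ℕ => ∏ i ∈ s, dscF n i) atTop
      (nhds (∏' k, dscF n k)) := (dsc_multipliable n).hasProd
  have hsum : Tendsto (fun s : Finset ℕ => 1 + ∑ i ∈ s, dscG n i) atTop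
      (nhds (1 + (2 : ℝ) ^ (-(n : ℤ)))) :=
    Filter.Tendsto.const_add 1 (dscG_hasSum n)
  refine le_of_tendsto_of_tendsto' hsum hprod fun s => ?_
  have := finset_one_add_sum_le_prod s (dscG n) (fun i => (dscG_pos n i).le)
  simpa [dscF, dscG] using this

private lemma dsc_shift (n : ℕ) :
    ∏' k, dscF n k = dscF n 0 * ∏' k, dscF (n + 1) k := by
  have hm : Multipliable (fun k => dscF n (k + 1)) :=
    (dsc_multipliable (n + 1)).congr fun k => by unfold dscF; congr 2; omega
  rw [tprod_eq_zero_mul' hm]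
  congr 1
  refine tprod_congr fun k => ?_
  unfold dscF
  congr 2
  omega

private lemma dsc_lt (n : ℕ) : 1 + (2 : ℝ) ^ (-(n : ℤ)) < ∏' k, dscF n k := by
  rw [dsc_shift n]
  have h1 : (1 : ℝ) + (2 : ℝ) ^ (-((n + 1 : ℕ) : ℤ)) ≤ ∏' k, dscF (n + 1) k :=
    dsc_le (n + 1)
  have hf0 : dscF n 0 = 1 + (2 : ℝ) ^ (-((n + 1 : ℕ) : ℤ)) := by unfold dscF; norm_num
  rw [hf0]
  have hx : (2 : ℝ) ^ (-((n + 1 : ℕ) : ℤ)) = (2 : ℝ) ^ (-(n : ℤ)) / 2 := by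
    rw [show (-((n + 1 : ℕ) : ℤ)) = (-(n : ℤ)) + (-1) by push_cast; ring,
      zpow_add₀ (by norm_num : (2:ℝ) ≠ 0)]
    norm_num; ring
  have hxpos : (0:ℝ) < (2 : ℝ) ^ (-(n : ℤ)) := zpow_pos (by norm_num) _
  have h2 : (1 : ℝ) + (2 : ℝ) ^ (-(n : ℤ)) <
      (1 + (2 : ℝ) ^ (-((n + 1 : ℕ) : ℤ))) * (1 + (2 : ℝ) ^ (-((n + 1 : ℕ) : ℤ))) := by
    rw [hx]; nlinarith
  have hpos : (0:ℝ) < 1 + (2 : ℝ) ^ (-((n + 1 : ℕ) : ℤ)) := by positivity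
  exact lt_of_lt_of_le h2 (mul_le_mul_of_nonneg_left h1 hpos.le)

theorem digit_set_complete (n : ℕ) :
    (1 + (2 : ℝ) ^ (-(n : ℤ)) < ∏' k : ℕ, (1 + (2 : ℝ) ^ (-((n + 1 + k : ℕ) : ℤ)))) ∧
    (Real.log (1 + (2 : ℝ) ^ (-(n : ℤ))) <
      ∑' k : ℕ, Real.log (1 + (2 : ℝ) ^ (-((n + 1 + k : ℕ) : ℤ)))) := by
  have hP := dsc_lt n
  have hlog : Real.log (1 + (2 : ℝ) ^ (-(n : ℤ))) < ∑' k, Real.log (dscF n k) := by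
    have h1 : Real.log (1 + (2 : ℝ) ^ (-(n : ℤ))) < Real.log (∏' k, dscF n k) := by
      apply Real.log_lt_log (by positivity) hP
    rwa [← dsc_exp_eq n, Real.log_exp] at h1
  exact ⟨hP, hlog⟩
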